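/- Every source decreasing abstract rewrite system is peak decreasing (with the source labeling), and hence confluent. -/

import Mathlib

namespace KB

-- Generic ARS notions
def NF {α : Type _} (r : α → α → Prop) (a : α) : Prop := ∀ b, ¬ r a b

def SymmCl {α : Type _} (r : α → α → Prop) (a b : α) : Prop := r a b ∨ r b a

def Conv {α : Type _} (r : α → α → Prop) : α → α → Prop :=
  Relation.ReflTransGen (SymmCl r)

def Joinable {α : Type _} (r : α → α → Prop) (a b : α) : Prop :=
  ∃ c, Relation.ReflTransGen r a c ∧ Relation.ReflTransGen r b c

def Confluent {α : Type _} (r : α → α → Prop) : Prop :=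
  ∀ a b c, Relation.ReflTransGen r a b → Relation.ReflTransGen r a c → Joinable r b c

def Terminating {α : Type _} (r : α → α → Prop) : Prop :=
  WellFounded (fun a b => r b a)

def Complete {α : Type _} (r : α → α → Prop) : Prop := Terminating r ∧ Confluent r

def NormTo {α : Type _} (r : α → α → Prop) (a b : α) : Prop :=
  Relation.ReflTransGen r a b ∧ NF r b

-- First-order terms
inductive Term (F V : Type) : Type where
  | var : V → Term F V
  | app : F → List (Term F V) → Term F V

variable {F V : Type}

def Term.subst (σ : V → Term F V) : Term F V → Term F V
  | .var x => σ x
  | .app f ts => .app f (ts.attach.map fun t => Term.subst σ t.1)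
decreasing_by
  simp only [Term.app.sizeOf_spec]
  have := List.sizeOf_lt_of_mem t.2
  omega

def Term.rename (π : V → V) (t : Term F V) : Term F V :=
  t.subst (fun x => Term.var (π x))

inductive Ctx (F V : Type) : Type where
  | hole : Ctx F V
  | cons : F → List (Term F V) → Ctx F V → List (Term F V) → Ctx F V

def Ctx.fill : Ctx F V → Term F V → Term F V
  | .hole, t => t
  | .cons f l C r, t => Term.app f (l ++ C.fill t :: r)

abbrev TRS (F V : Type) := Set (Term F V × Term F V)

def Step (R : TRS F V) (s t : Term F V) : Prop :=
  ∃ (C : Ctx F V) (σ : V → Term F V) (l r : Term F V),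
    (l, r) ∈ R ∧ s = C.fill (l.subst σ) ∧ t = C.fill (r.subst σ)

inductive InVars (x : V) : Term F V → Prop where
  | var : InVars x (Term.var x)
  | app {f : F} {ts : List (Term F V)} {t : Term F V} :
      t ∈ ts → InVars x t → InVars x (Term.app f ts)

def WellFormedRule (l r : Term F V) : Prop :=
  (∀ x : V, l ≠ Term.var x) ∧ ∀ x, InVars x r → InVars x l

def IsTRS (R : TRS F V) : Prop := ∀ p ∈ R, WellFormedRule p.1 p.2

inductive Ground : Term F V → Prop where
  | app {f : F} {ts : List (Term F V)} : (∀ t ∈ ts, Ground t) → Ground (Term.app f ts)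

def GroundSys (R : TRS F V) : Prop := ∀ p ∈ R, Ground p.1 ∧ Ground p.2

def LeftReduced (R : TRS F V) : Prop := ∀ p ∈ R, NF (Step (R \ {p})) p.1
def RightReduced (R : TRS F V) : Prop := ∀ p ∈ R, NF (Step R) p.2
def Reduced (R : TRS F V) : Prop := LeftReduced R ∧ RightReduced R

def RuleVariant (p q : Term F V × Term F V) : Prop :=
  ∃ π : V → V, Function.Bijective π ∧ p.1 = q.1.rename π ∧ p.2 = q.2.rename π

def LitSim (R S : TRS F V) : Prop :=
  (∀ p ∈ R, ∃ q ∈ S, RuleVariant p q) ∧ (∀ q ∈ S, ∃ p ∈ R, RuleVariant q p)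

def Encompass (s t : Term F V) : Prop :=
  ∃ (C : Ctx F V) (σ : V → Term F V), s = C.fill (t.subst σ)

def PEncompass (s t : Term F V) : Prop := Encompass s t ∧ ¬ Encompass t s

def ReductionOrder (gt : Term F V → Term F V → Prop) : Prop :=
  Transitive gt ∧ WellFounded (fun a b => gt b a) ∧
  (∀ (C : Ctx F V) s t, gt s t → gt (C.fill s) (C.fill t)) ∧
  (∀ (σ : V → Term F V) s t, gt s t → gt (s.subst σ) (t.subst σ))

-- positions
def subt : List ℕ → Term F V → Option (Term F V)
  | [], t => some t
  | _ :: _, Term.var _ => none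
  | i :: p, Term.app _ ts => (ts[i]?).bind (subt p)

def repl : List ℕ → Term F V → Term F V → Option (Term F V)
  | [], _, u => some u
  | _ :: _, Term.var _, _ => none
  | i :: p, Term.app f ts, u =>
      (ts[i]?).bind fun w => (repl p w u).map fun w' => Term.app f (ts.set i w')

def FunPos (p : List ℕ) (t : Term F V) : Prop :=
  ∃ f ts, subt p t = some (Term.app f ts)

def Unifier (σ : V → Term F V) (s t : Term F V) : Prop := s.subst σ = t.subst σ

def IsMGU (σ : V → Term F V) (s t : Term F V) : Prop :=
  Unifier σ s t ∧ ∀ τ, Unifier τ s t → ∃ ρ, ∀ x, (σ x).subst ρ = τ x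

def VarsDisjoint (p q : Term F V × Term F V) : Prop :=
  ∀ x, ¬ ((InVars x p.1 ∨ InVars x p.2) ∧ (InVars x q.1 ∨ InVars x q.2))

def Overlap (R : TRS F V) (l1 r1 : Term F V) (p : List ℕ) (l2 r2 : Term F V) : Prop :=
  (∃ q ∈ R, RuleVariant (l1, r1) q) ∧
  (∃ q ∈ R, RuleVariant (l2, r2) q) ∧
  VarsDisjoint (l1, r1) (l2, r2) ∧
  FunPos p l2 ∧
  (∃ w, subt p l2 = some w ∧ ∃ σ, Unifier σ l1 w) ∧
  (p = [] → ¬ RuleVariant (l1, r1) (l2, r2))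

def CPeak (R : TRS F V) (t : Term F V) (p : List ℕ) (s u : Term F V) : Prop :=
  ∃ (l1 r1 l2 r2 : Term F V) (σ : V → Term F V) (w : Term F V),
    Overlap R l1 r1 p l2 r2 ∧ subt p l2 = some w ∧ IsMGU σ l1 w ∧
    s = l2.subst σ ∧ u = r2.subst σ ∧
    repl p (l2.subst σ) (r1.subst σ) = some t

def PrimeCPeak (R : TRS F V) (t : Term F V) (p : List ℕ) (s u : Term F V) : Prop :=
  CPeak R t p s u ∧
  ∀ w v, subt p s = some w → (∃ q, q ≠ [] ∧ subt q w = some v) → NF (Step R) v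

def PCP (R : TRS F V) : Set (Term F V × Term F V) :=
  { e | ∃ p s, PrimeCPeak R e.1 p s e.2 }

def Nabla (R : TRS F V) (s u w : Term F V) : Prop :=
  Relation.TransGen (Step R) s u ∧ Relation.TransGen (Step R) s w ∧
  (Joinable (Step R) u w ∨ SymmCl (Step (PCP R)) u w)

-- counted conversions and rewrite sequences
inductive ConvN {α : Type _} (r : α → α → Prop) : ℕ → ℕ → α → α → Prop where
  | refl (a : α) : ConvN r 0 0 a a
  | fwd {l n : ℕ} {a b c : α} : r a b → ConvN r l n b c → ConvN r l (n + 1) a c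
  | bwd {l n : ℕ} {a b c : α} : r b a → ConvN r l n b c → ConvN r (l + 1) n a c

inductive StepsN {α : Type _} (r : α → α → Prop) : ℕ → α → α → Prop where
  | refl (a : α) : StepsN r 0 a a
  | step {n : ℕ} {a b c : α} : r a b → StepsN r n b c → StepsN r (n + 1) a c

def RandomDescent {α : Type _} (r : α → α → Prop) : Prop :=
  ∀ l m a b, ConvN r l m a b → NF r b → ∃ n, StepsN r n a b ∧ n + l = m


namespace KBAux

variable {A : Type _}

/-- One-step Dershowitz–Manna relation: `N` is obtained from `M` by replacing
one element `a` by a multiset of elements all below `a` (w.r.t. `lt`). -/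
def Mult1 (lt : A → A → Prop) (N M : Multiset A) : Prop :=
  ∃ a M₀ K, M = a ::ₘ M₀ ∧ N = K + M₀ ∧ ∀ k ∈ K, lt k a

theorem mult1_acc_cons {lt : A → A → Prop} :
    ∀ a : A, Acc lt a → ∀ M : Multiset A, Acc (Mult1 lt) M → Acc (Mult1 lt) (a ::ₘ M) := by
  intro a ha
  induction ha with
  | intro a _ iha =>
    intro M hM
    induction hM with
    | intro M hMacc ihM =>
      constructor
      rintro N ⟨b, M₀, K, hM1, hN, hK⟩
      rcases (Multiset.cons_eq_cons).1 hM1 with ⟨rfl, rfl⟩ | ⟨hne, U, hMU, hM₀U⟩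
      · -- replaced the head `a`: N = K + M, all of K below a
        subst hN
        clear hM1
        have hMa : Acc (Mult1 lt) M := ⟨M, hMacc⟩
        clear ihM hMacc
        induction K using Multiset.induction with
        | empty => simpa using hMa
        | cons k K ih =>
          have hk : lt k a := hK k (Multiset.mem_cons_self _ _)
          have hrest : Acc (Mult1 lt) (K + M) :=
            ih (fun x hx => hK x (Multiset.mem_cons_of_mem hx))
          have := iha k hk (K + M) hrest
          simpa [Multiset.cons_add] using this
      · -- replaced an element inside M
        have hsmaller : Mult1 lt (K + U) M := ⟨b, U, K, hMU, rfl, hK⟩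
        have := ihM (K + U) hsmaller
        have hNe : N = a ::ₘ (K + U) := by
          rw [hN, hM₀U]
          simp [Multiset.add_cons]
        rw [hNe]
        exact this

theorem mult1_wf {lt : A → A → Prop} (h : WellFounded lt) :
    WellFounded (Mult1 lt) := by
  constructor
  intro M
  induction M using Multiset.induction with
  | empty =>
    constructor
    rintro N ⟨a, M₀, K, hM, _, _⟩
    exact absurd hM.symm (Multiset.cons_ne_zero)
  | cons a M ih => exact mult1_acc_cons a (h.apply a) M ih


/-- Conversions labeled by the multiset of the sources of their steps. -/
inductive LConv (r : A → A → Prop) : Multiset A → A → A → Prop where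
  | refl (a : A) : LConv r 0 a a
  | fwd {a b c : A} {M : Multiset A} : r a b → LConv r M b c → LConv r (a ::ₘ M) a c
  | bwd {a b c : A} {M : Multiset A} : r b a → LConv r M b c → LConv r (b ::ₘ M) a c

/-- Forward chains labeled by sources. -/
inductive FChain (r : A → A → Prop) : Multiset A → A → A → Prop where
  | refl (a : A) : FChain r 0 a a
  | step {a b c : A} {M : Multiset A} : r a b → FChain r M b c → FChain r (a ::ₘ M) a c

variable {r : A → A → Prop}

theorem LConv.append {M N : Multiset A} {a b c : A} (h₁ : LConv r M a b)
    (h₂ : LConv r N b c) : LConv r (M + N) a c := by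
  induction h₁ with
  | refl => simpa using h₂
  | fwd h _ ih => rw [Multiset.cons_add]; exact LConv.fwd h (ih h₂)
  | bwd h _ ih => rw [Multiset.cons_add]; exact LConv.bwd h (ih h₂)

theorem LConv.reverse {M : Multiset A} {a b : A} (h : LConv r M a b) : LConv r M b a := by
  induction h with
  | refl => exact LConv.refl _
  | @fwd a b c M h _ ih =>
    have : LConv r (M + {a}) c a := ih.append (LConv.bwd h (LConv.refl _))
    rwa [add_comm, Multiset.singleton_add] at this
  | @bwd a b c M h _ ih =>
    have : LConv r (M + {b}) c a := ih.append (LConv.fwd h (LConv.refl _))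
    rwa [add_comm, Multiset.singleton_add] at this

theorem FChain.toLConv {M : Multiset A} {a b : A} (h : FChain r M a b) : LConv r M a b := by
  induction h with
  | refl => exact LConv.refl _
  | step h _ ih => exact LConv.fwd h ih

theorem FChain.toRTG {M : Multiset A} {a b : A} (h : FChain r M a b) :
    Relation.ReflTransGen r a b := by
  induction h with
  | refl => exact .refl
  | step h _ ih => exact .head h ih

theorem FChain.snoc {M : Multiset A} {a b c : A} (h : FChain r M a b) (h' : r b c) :
    FChain r (b ::ₘ M) a c := by
  induction h with
  | refl => exact FChain.step h' (FChain.refl _)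
  | @step a d e M h _ ih =>
    have := FChain.step h (ih h')
    simpa [Multiset.cons_swap] using this

theorem FChain.ofRTG {a b : A} (h : Relation.ReflTransGen r a b) :
    ∃ M, FChain r M a b := by
  induction h with
  | refl => exact ⟨0, FChain.refl _⟩
  | tail _ h' ih =>
    obtain ⟨M, hM⟩ := ih
    exact ⟨_, hM.snoc h'⟩

def LValley (r : A → A → Prop) (M : Multiset A) (a b : A) : Prop :=
  ∃ e M₁ M₂, M = M₁ + M₂ ∧ FChain r M₁ a e ∧ FChain r M₂ b e

theorem LValley.joinable {M : Multiset A} {a b : A} (h : LValley r M a b) :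
    ∃ e, Relation.ReflTransGen r a e ∧ Relation.ReflTransGen r b e := by
  obtain ⟨e, _, _, _, h₁, h₂⟩ := h
  exact ⟨e, h₁.toRTG, h₂.toRTG⟩

/-- Peak decomposition: either a labeled conversion is a valley, or it contains a
local peak `u ← q → v`. -/
theorem LConv.decomp {M : Multiset A} {a b : A} (h : LConv r M a b) :
    LValley r M a b ∨
      ∃ q u v N₁ N₂, M = q ::ₘ q ::ₘ (N₁ + N₂) ∧
        LConv r N₁ a u ∧ r q u ∧ r q v ∧ LConv r N₂ v b := by
  induction h with
  | refl a => exact Or.inl ⟨a, 0, 0, by simp, FChain.refl _, FChain.refl _⟩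
  | @fwd a c b M h _ ih =>
    rcases ih with ⟨e, M₁, M₂, hM, h₁, h₂⟩ | ⟨q, u, v, N₁, N₂, hM, hc, hqu, hqv, hvb⟩
    · exact Or.inl ⟨e, a ::ₘ M₁, M₂, by rw [hM, Multiset.cons_add], FChain.step h h₁, h₂⟩
    · refine Or.inr ⟨q, u, v, a ::ₘ N₁, N₂, ?_, LConv.fwd h hc, hqu, hqv, hvb⟩
      rw [hM, Multiset.cons_add]
      simp [Multiset.cons_swap]
  | @bwd a c b M h _ ih =>
    rcases ih with ⟨e, M₁, M₂, hM, h₁, h₂⟩ | ⟨q, u, v, N₁, N₂, hM, hc, hqu, hqv, hvb⟩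
    · cases h₁ with
      | refl =>
        refine Or.inl ⟨a, 0, c ::ₘ M₂, ?_, FChain.refl _, h₂.snoc h⟩
        rw [hM]; simp
      | @step c f e M₁' hcf hchain =>
        refine Or.inr ⟨c, a, f, 0, M₁' + M₂, ?_, LConv.refl _, h, hcf, ?_⟩
        · rw [hM, Multiset.cons_add]; simp
        · exact hchain.toLConv.append h₂.toLConv.reverse
    · refine Or.inr ⟨q, u, v, c ::ₘ N₁, N₂, ?_, LConv.bwd h hc, hqu, hqv, hvb⟩
      rw [hM, Multiset.cons_add]
      simp [Multiset.cons_swap]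

theorem below_conv {gt : A → A → Prop} {q u v : A}
    (h : Relation.ReflTransGen (fun x y => (r x y ∧ gt q x) ∨ (r y x ∧ gt q y)) u v) :
    ∃ K : Multiset A, (∀ k ∈ K, gt q k) ∧ LConv r K u v := by
  induction h with
  | refl => exact ⟨0, by simp, LConv.refl _⟩
  | tail _ hstep ihK =>
    obtain ⟨K, hKlt, hKc⟩ := ihK
    rcases hstep with ⟨hxy, hx⟩ | ⟨hyx, hy⟩
    · refine ⟨K + {_}, ?_, hKc.append (LConv.fwd hxy (LConv.refl _))⟩
      intro k hk
      rcases Multiset.mem_add.1 hk with hk | hk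
      · exact hKlt k hk
      · rw [Multiset.mem_singleton.1 hk]; exact hx
    · refine ⟨K + {_}, ?_, hKc.append (LConv.bwd hyx (LConv.refl _))⟩
      intro k hk
      rcases Multiset.mem_add.1 hk with hk | hk
      · exact hKlt k hk
      · rw [Multiset.mem_singleton.1 hk]; exact hy

theorem main_joinable {gt : A → A → Prop}
    (hwf : WellFounded (fun a b => gt b a))
    (hsd : ∀ a b c, r a b → r a c →
      Relation.ReflTransGen (fun x y => (r x y ∧ gt a x) ∨ (r y x ∧ gt a y)) b c) :
    ∀ M : Multiset A, ∀ a b : A, LConv r M a b →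
      ∃ e, Relation.ReflTransGen r a e ∧ Relation.ReflTransGen r b e := by
  have hDM : WellFounded (Relation.TransGen (Mult1 (fun a b => gt b a))) :=
    (mult1_wf hwf).transGen
  intro M
  induction M using hDM.induction with
  | _ M ih =>
    intro a b h
    rcases h.decomp with hval | ⟨q, u, v, N₁, N₂, hM, hau, hqu, hqv, hvb⟩
    · exact hval.joinable
    · obtain ⟨K, hKlt, hKc⟩ := below_conv (gt := gt) (hsd q u v hqu hqv)
      have hnew : LConv r (N₁ + (K + N₂)) a b := hau.append (hKc.append hvb)
      have hless : Relation.TransGen (Mult1 (fun a b => gt b a)) (N₁ + (K + N₂)) M := by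
        rw [hM]
        refine Relation.TransGen.head (b := q ::ₘ (N₁ + N₂)) ?_ (Relation.TransGen.single ?_)
        · exact ⟨q, N₁ + N₂, K, rfl, by abel, fun k hk => hKlt k hk⟩
        · exact ⟨q, q ::ₘ (N₁ + N₂), 0, rfl, by simp, by simp⟩
      exact ih _ hless a b hnew

end KBAux

/-- Every source decreasing ARS is peak decreasing (with source labeling),
and hence confluent. -/
theorem source_decreasing_peak_decreasing_and_confluent {A : Type _}
    (r : A → A → Prop) (gt : A → A → Prop) (htrans : Transitive gt)
    (hwf : WellFounded (fun a b => gt b a))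
    (hsd : ∀ a b c, r a b → r a c →
      Relation.ReflTransGen (fun x y => (r x y ∧ gt a x) ∨ (r y x ∧ gt a y)) b c) :
    (∀ (i j : A) (a b c : A), (r a b ∧ i = a) → (r a c ∧ j = a) →
      Relation.ReflTransGen
        (fun x y => ∃ k, (gt i k ∨ gt j k) ∧ ((r x y ∧ k = x) ∨ (r y x ∧ k = y))) b c) ∧
    Confluent r := by
  constructor
  · rintro i j a b c ⟨hab, hi⟩ ⟨hac, hj⟩
    subst hi; subst hj
    refine Relation.ReflTransGen.mono ?_ _ _ (hsd _ _ _ hab hac)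
    rintro x y (⟨hxy, hx⟩ | ⟨hyx, hy⟩)
    · exact ⟨x, Or.inl hx, Or.inl ⟨hxy, rfl⟩⟩
    · exact ⟨y, Or.inl hy, Or.inr ⟨hyx, rfl⟩⟩
  · intro a b c hab hac
    obtain ⟨M₁, h₁⟩ := KBAux.FChain.ofRTG hab
    obtain ⟨M₂, h₂⟩ := KBAux.FChain.ofRTG hac
    have hconv : KBAux.LConv r (M₁ + M₂) b c :=
      h₁.toLConv.reverse.append h₂.toLConv
    obtain ⟨e, he₁, he₂⟩ := KBAux.main_joinable hwf hsd _ _ _ hconv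
    exact ⟨e, he₁, he₂⟩

end KB
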